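/- Fix positive integer weights (m_1, …, m_M) with m_1 + ⋯ + m_M = N − 1. The vertices (extreme points) of the polytope D of weighted doubly stochastic tw-matrices are exactly the matrices Y_𝓘 for ordered partitions 𝓘 = (I_1, …, I_M) of {1, …, N−1} with |I_i| = m_i, where (Y_𝓘)_{ij} = 1/m_i if j ∈ I_i and (Y_𝓘)_{ij} = 0 otherwise. -/

import Mathlib

/-- An ordered partition of the column set `Fin n` into blocks of sizes `m i`. -/
def IsTWPartition {M n : ℕ} (m : Fin M → ℕ) (P : Fin M → Finset (Fin n)) : Prop :=
  (∀ i, (P i).card = m i) ∧ ∀ j : Fin n, ∃! i, j ∈ P i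

/-- The polytope of weighted doubly stochastic tw-matrices: entrywise nonnegative
`M × n` matrices with all row sums `1` and all weighted column sums `1`. -/
def stochPolytope {M n : ℕ} (m : Fin M → ℕ) : Set (Fin M → Fin n → ℝ) :=
  {Y | (∀ i j, 0 ≤ Y i j) ∧ (∀ i, ∑ j, Y i j = 1) ∧ ∀ j, ∑ i, (m i : ℝ) * Y i j = 1}

theorem extremePoints_stochPolytope {M n : ℕ} (m : Fin M → ℕ)
    (hm : ∀ i, 1 ≤ m i) (hw : ∑ i, m i = n) (Y : Fin M → Fin n → ℝ) :
    Y ∈ Set.extremePoints ℝ (stochPolytope m) ↔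
      ∃ P : Fin M → Finset (Fin n), IsTWPartition m P ∧
        Y = fun i j => if j ∈ P i then ((m i : ℝ))⁻¹ else 0 := by
  classical
  have hm0 : ∀ i, (0:ℝ) < (m i : ℝ) := fun i => by exact_mod_cast hm i
  constructor
  · intro hY
    obtain ⟨⟨Ynn, hrow, hcol⟩, hext⟩ := hY
    -- entrywise upper bound
    have hub : ∀ i j, Y i j ≤ (m i : ℝ)⁻¹ := by
      intro i j
      have h1 : (m i:ℝ) * Y i j ≤ 1 := by
        rw [← hcol j]
        exact Finset.single_le_sum
          (fun k _ => mul_nonneg (Nat.cast_nonneg _) (Ynn k j)) (Finset.mem_univ i)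
      rw [inv_eq_one_div, le_div_iff₀ (hm0 i), mul_comm]
      exact h1
    -- extremality as a kernel condition
    have hker : ∀ Δ : Fin M → Fin n → ℝ,
        (∀ i j, Y i j = 0 → Δ i j = 0) →
        (∀ i, ∑ j, Δ i j = 0) →
        (∀ j, ∑ i, (m i : ℝ) * Δ i j = 0) → Δ = 0 := by
      intro Δ hsupp hrows hcols
      by_contra hΔ
      have hex : ∃ p : Fin M × Fin n, Δ p.1 p.2 ≠ 0 := by
        by_contra h; push_neg at h
        exact hΔ (funext fun i => funext fun j => h (i, j))
      obtain ⟨p₁, hp₁⟩ := hex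
      set S : Finset (Fin M × Fin n) := Finset.univ.filter (fun p => Y p.1 p.2 ≠ 0) with hS
      have hp₁S : p₁ ∈ S := by
        simp only [hS, Finset.mem_filter, Finset.mem_univ, true_and]
        intro h; exact hp₁ (hsupp _ _ h)
      have hSne : S.Nonempty := ⟨p₁, hp₁S⟩
      set δ := S.inf' hSne (fun p => Y p.1 p.2) with hδdef
      have hδpos : 0 < δ := by
        rw [hδdef, Finset.lt_inf'_iff]
        intro p hp
        have hne : Y p.1 p.2 ≠ 0 := by
          simpa only [hS, Finset.mem_filter, Finset.mem_univ, true_and] using hp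
        exact lt_of_le_of_ne (Ynn _ _) (Ne.symm hne)
      have huniv : (Finset.univ : Finset (Fin M × Fin n)).Nonempty := ⟨p₁, Finset.mem_univ _⟩
      set B := Finset.univ.sup' huniv (fun p : Fin M × Fin n => |Δ p.1 p.2|) with hBdef
      have hB0 : 0 ≤ B :=
        le_trans (abs_nonneg _)
          (Finset.le_sup' (fun p : Fin M × Fin n => |Δ p.1 p.2|) (Finset.mem_univ p₁))
      set ε := δ / (B + 1) with hεdef
      have hεpos : 0 < ε := div_pos hδpos (by linarith)
      have hbnd : ∀ i j, ε * |Δ i j| ≤ Y i j := by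
        intro i j
        by_cases h : Δ i j = 0
        · simpa [h] using Ynn i j
        · have hYij : Y i j ≠ 0 := fun h0 => h (hsupp i j h0)
          have hmem : (i, j) ∈ S := by
            simp only [hS, Finset.mem_filter, Finset.mem_univ, true_and]; exact hYij
          have h1 : δ ≤ Y i j := Finset.inf'_le _ hmem
          have h2 : |Δ i j| ≤ B :=
            Finset.le_sup' (fun p : Fin M × Fin n => |Δ p.1 p.2|) (Finset.mem_univ (i, j))
          have h3 : ε * (B + 1) = δ := div_mul_cancel₀ _ (by linarith)
          nlinarith [abs_nonneg (Δ i j)]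
      have hmemo : ∀ t : ℝ, |t| ≤ ε → (fun i j => Y i j + t * Δ i j) ∈ stochPolytope m := by
        intro t ht
        refine ⟨?_, ?_, ?_⟩
        · intro i j
          show 0 ≤ Y i j + t * Δ i j
          have h1 : |t * Δ i j| ≤ ε * |Δ i j| := by
            rw [abs_mul]
            exact mul_le_mul_of_nonneg_right ht (abs_nonneg _)
          have h2 := hbnd i j
          have h3 := neg_abs_le (t * Δ i j)
          linarith
        · intro i
          rw [Finset.sum_add_distrib, hrow i, ← Finset.mul_sum, hrows i]; ring
        · intro j
          have h4 : ∀ i, (m i:ℝ) * (Y i j + t * Δ i j)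
              = (m i:ℝ) * Y i j + t * ((m i:ℝ) * Δ i j) := fun i => by ring
          simp only [h4]
          rw [Finset.sum_add_distrib, hcol j, ← Finset.mul_sum, hcols j]; ring
      have h1 := hmemo (-ε) (by rw [abs_neg, abs_of_pos hεpos])
      have h2 := hmemo ε (by rw [abs_of_pos hεpos])
      have hseg : Y ∈ openSegment ℝ (fun i j => Y i j + (-ε) * Δ i j)
          (fun i j => Y i j + ε * Δ i j) := by
        refine ⟨1/2, 1/2, by norm_num, by norm_num, by norm_num, ?_⟩
        funext i j
        simp only [Pi.add_apply, Pi.smul_apply, smul_eq_mul]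
        ring
      have hx2 := hext h1 h2 hseg
      have h5 := congrFun (congrFun hx2 p₁.1) p₁.2
      have h5' : Y p₁.1 p₁.2 + (-ε) * Δ p₁.1 p₁.2 = Y p₁.1 p₁.2 := h5
      have h6 : ε * Δ p₁.1 p₁.2 = 0 := by linarith
      exact hp₁ (by
        rcases mul_eq_zero.1 h6 with h | h
        · exact absurd h hεpos.ne'
        · exact h)
    -- no fractional entries
    have hnofrac : ∀ i j, 0 < Y i j → (m i : ℝ)⁻¹ ≤ Y i j := by
      by_contra hcon
      push_neg at hcon
      obtain ⟨i0, j0, hi0pos, hi0lt⟩ := hcon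
      set F : Finset (Fin M × Fin n) :=
        Finset.univ.filter (fun p => 0 < Y p.1 p.2 ∧ Y p.1 p.2 < (m p.1 : ℝ)⁻¹) with hFdef
      have hmemF : ∀ p : Fin M × Fin n,
          p ∈ F ↔ 0 < Y p.1 p.2 ∧ Y p.1 p.2 < (m p.1:ℝ)⁻¹ := by
        intro p; simp [hFdef]
      have hF0 : (i0, j0) ∈ F := (hmemF _).2 ⟨hi0pos, hi0lt⟩
      -- column partner
      have colp : ∀ p ∈ F, ∃ i', i' ≠ p.1 ∧ (i', p.2) ∈ F := by
        intro p hp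
        obtain ⟨hpos, hlt⟩ := (hmemF p).1 hp
        have hlt1 : (m p.1:ℝ) * Y p.1 p.2 < 1 := by
          have := mul_lt_mul_of_pos_left hlt (hm0 p.1)
          rwa [mul_inv_cancel₀ (hm0 p.1).ne'] at this
        have hsplit : ∑ i ∈ Finset.univ.erase p.1, (m i:ℝ) * Y i p.2
            + (m p.1:ℝ) * Y p.1 p.2 = 1 := by
          rw [Finset.sum_erase_add _ _ (Finset.mem_univ p.1)]
          exact hcol p.2
        have hrest : 0 < ∑ i ∈ Finset.univ.erase p.1, (m i:ℝ) * Y i p.2 := by linarith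
        have hex : ∃ i' ∈ Finset.univ.erase p.1, 0 < (m i':ℝ) * Y i' p.2 := by
          by_contra hno; push_neg at hno
          have : ∑ i ∈ Finset.univ.erase p.1, (m i:ℝ) * Y i p.2 ≤ 0 :=
            Finset.sum_nonpos hno
          linarith
        obtain ⟨i', hi'mem, hi'pos⟩ := hex
        have hi'ne : i' ≠ p.1 := (Finset.mem_erase.1 hi'mem).1
        have hYpos : 0 < Y i' p.2 := by
          by_contra h
          push_neg at h
          nlinarith [hm0 i']
        have hterm : (m i':ℝ) * Y i' p.2
            ≤ ∑ i ∈ Finset.univ.erase p.1, (m i:ℝ) * Y i p.2 :=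
          Finset.single_le_sum (f := fun i => (m i:ℝ) * Y i p.2)
            (fun k _ => mul_nonneg (Nat.cast_nonneg _) (Ynn k p.2)) hi'mem
        have hmul : (m i':ℝ) * Y i' p.2 < 1 := by nlinarith [mul_pos (hm0 p.1) hpos]
        have hYlt : Y i' p.2 < (m i':ℝ)⁻¹ := by
          rw [inv_eq_one_div, lt_div_iff₀ (hm0 i'), mul_comm]
          exact hmul
        exact ⟨i', hi'ne, (hmemF _).2 ⟨hYpos, hYlt⟩⟩
      -- row partner
      have rowp : ∀ p ∈ F, ∃ j', j' ≠ p.2 ∧ (p.1, j') ∈ F := by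
        intro p hp
        obtain ⟨hpos, hlt⟩ := (hmemF p).1 hp
        by_contra hno; push_neg at hno
        have hvals : ∀ j', j' ≠ p.2 → Y p.1 j' = 0 ∨ Y p.1 j' = (m p.1:ℝ)⁻¹ := by
          intro j' hj'
          have hnotF := hno j' hj'
          rw [hmemF] at hnotF
          push_neg at hnotF
          by_cases h0 : Y p.1 j' = 0
          · exact Or.inl h0
          · have hpos' : 0 < Y p.1 j' := lt_of_le_of_ne (Ynn _ _) (Ne.symm h0)
            exact Or.inr (le_antisymm (hub _ _) (hnotF hpos'))
        have hsplit : ∑ j ∈ Finset.univ.erase p.2, Y p.1 j + Y p.1 p.2 = 1 := by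
          rw [Finset.sum_erase_add _ _ (Finset.mem_univ p.2)]
          exact hrow p.1
        set k := ((Finset.univ.erase p.2).filter (fun j => Y p.1 j ≠ 0)).card with hk
        have hsumval : ∑ j ∈ Finset.univ.erase p.2, Y p.1 j = (k:ℝ) * (m p.1:ℝ)⁻¹ := by
          have : ∀ j ∈ Finset.univ.erase p.2,
              Y p.1 j = if Y p.1 j ≠ 0 then (m p.1:ℝ)⁻¹ else 0 := by
            intro j hj
            rcases hvals j (Finset.mem_erase.1 hj).1 with h | h
            · simp [h]
            · have hne : Y p.1 j ≠ 0 := by rw [h]; exact (inv_pos.2 (hm0 p.1)).ne'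
              rw [if_pos hne]; exact h
          rw [Finset.sum_congr rfl this, ← Finset.sum_filter, Finset.sum_const,
            nsmul_eq_mul, hk]
        have hmul1 : 0 < (m p.1:ℝ) * Y p.1 p.2 := mul_pos (hm0 p.1) hpos
        have hmul2 : (m p.1:ℝ) * Y p.1 p.2 < 1 := by
          have := mul_lt_mul_of_pos_left hlt (hm0 p.1)
          rwa [mul_inv_cancel₀ (hm0 p.1).ne'] at this
        have hkeq : (k:ℝ) + (m p.1:ℝ) * Y p.1 p.2 = (m p.1:ℝ) := by
          have := hsplit
          rw [hsumval] at this
          have h5 : (m p.1:ℝ) * ((k:ℝ) * (m p.1:ℝ)⁻¹ + Y p.1 p.2) = (m p.1:ℝ) * 1 := by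
            rw [this]
          rw [mul_add, ← mul_assoc, mul_comm (m p.1:ℝ) (k:ℝ), mul_assoc,
            mul_inv_cancel₀ (hm0 p.1).ne', mul_one, mul_one] at h5
          linarith
        have hklt : k < m p.1 := by
          have : (k:ℝ) < (m p.1:ℝ) := by linarith
          exact_mod_cast this
        have hkgt : m p.1 < k + 1 := by
          have : (m p.1:ℝ) < (k:ℝ) + 1 := by linarith
          exact_mod_cast this
        omega
      set R' := F.image Prod.fst with hR'
      set C' := F.image Prod.snd with hC'
      have hdegR : ∀ i ∈ R', 2 ≤ (F.filter (fun p => p.1 = i)).card := by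
        intro i hi
        obtain ⟨p, hpF, hpi⟩ := Finset.mem_image.1 hi
        obtain ⟨j', hj'ne, hj'F⟩ := rowp p hpF
        rw [show (2:ℕ) = 1 + 1 from rfl, Nat.add_one_le_iff, Finset.one_lt_card]
        refine ⟨p, Finset.mem_filter.2 ⟨hpF, hpi⟩,
          (p.1, j'), Finset.mem_filter.2 ⟨hj'F, hpi⟩, ?_⟩
        exact fun h => hj'ne (congrArg Prod.snd h).symm
      have hdegC : ∀ j ∈ C', 2 ≤ (F.filter (fun p => p.2 = j)).card := by
        intro j hj
        obtain ⟨p, hpF, hpj⟩ := Finset.mem_image.1 hj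
        obtain ⟨i', hi'ne, hi'F⟩ := colp p hpF
        rw [show (2:ℕ) = 1 + 1 from rfl, Nat.add_one_le_iff, Finset.one_lt_card]
        refine ⟨p, Finset.mem_filter.2 ⟨hpF, hpj⟩,
          (i', p.2), Finset.mem_filter.2 ⟨hi'F, hpj⟩, ?_⟩
        exact fun h => hi'ne (congrArg Prod.fst h).symm
      have hcardR : 2 * R'.card ≤ F.card := by
        rw [Finset.card_eq_sum_card_fiberwise
          (f := Prod.fst) (t := R') (fun p hp => Finset.mem_image_of_mem _ hp)]
        calc 2 * R'.card = ∑ _i ∈ R', 2 := by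
              rw [Finset.sum_const, smul_eq_mul, mul_comm]
          _ ≤ _ := Finset.sum_le_sum hdegR
      have hcardC : 2 * C'.card ≤ F.card := by
        rw [Finset.card_eq_sum_card_fiberwise
          (f := Prod.snd) (t := C') (fun p hp => Finset.mem_image_of_mem _ hp)]
        calc 2 * C'.card = ∑ _j ∈ C', 2 := by
              rw [Finset.sum_const, smul_eq_mul, mul_comm]
          _ ≤ _ := Finset.sum_le_sum hdegC
      have hj0C : j0 ∈ C' := Finset.mem_image_of_mem Prod.snd hF0
      set C'' := C'.erase j0 with hC''
      -- the linear map
      set A : Matrix (↥R' ⊕ ↥C'') ↥F ℝ := fun w p =>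
        Sum.elim
          (fun i : ↥R' => if (p : Fin M × Fin n).1 = (i : Fin M) then (1:ℝ) else 0)
          (fun j : ↥C'' => if (p : Fin M × Fin n).2 = (j : Fin n)
            then ((m (p : Fin M × Fin n).1 : ℝ)) else 0) w with hA
      have hdim : Fintype.card (↥R' ⊕ ↥C'') < Fintype.card ↥F := by
        rw [Fintype.card_sum, Fintype.card_coe, Fintype.card_coe, Fintype.card_coe,
          hC'', Finset.card_erase_of_mem hj0C]
        have h1 : 1 ≤ C'.card := Finset.card_pos.2 ⟨j0, hj0C⟩
        omega
      have hninj : ¬ Function.Injective A.mulVecLin := by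
        intro hinj
        have hle := LinearMap.finrank_le_finrank_of_injective hinj
        rw [Module.finrank_fintype_fun_eq_card, Module.finrank_fintype_fun_eq_card] at hle
        omega
      obtain ⟨c₁, c₂, hceq, hcne⟩ := Function.not_injective_iff.1 hninj
      set c : ↥F → ℝ := c₁ - c₂ with hc
      have hcne0 : c ≠ 0 := sub_ne_zero.2 hcne
      have hTc : A.mulVecLin c = 0 := by rw [hc, map_sub, hceq, sub_self]
      set Δ : Fin M → Fin n → ℝ :=
        fun i j => if h : (i, j) ∈ F then c ⟨(i, j), h⟩ else 0 with hΔdef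
      have hgc : ∀ p : ↥F, Δ (p : Fin M × Fin n).1 (p : Fin M × Fin n).2 = c p := by
        intro p
        have hmem : ((p : Fin M × Fin n).1, (p : Fin M × Fin n).2) ∈ F := by
          rw [Prod.mk.eta]; exact p.2
        rw [hΔdef]
        simp only
        rw [dif_pos hmem]
      have hΔoff : ∀ p : Fin M × Fin n, p ∉ F → Δ p.1 p.2 = 0 := by
        intro p hp
        rw [hΔdef]
        simp only
        rw [dif_neg (by rwa [Prod.mk.eta])]
      -- sum collapsing lemmas
      have hrowsum : ∀ (g : Fin M × Fin n → ℝ), (∀ p, p ∉ F → g p = 0) →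
          ∀ i : Fin M, ∑ q ∈ F, (if q.1 = i then g q else 0) = ∑ j, g (i, j) := by
        intro g hg i
        rw [Finset.sum_subset (Finset.subset_univ F)
          (by intro p _ hp; rw [hg p hp]; simp)]
        rw [Fintype.sum_prod_type]
        have hinner : ∀ a : Fin M, (∑ b, if a = i then g (a, b) else 0)
            = if a = i then ∑ b, g (a, b) else 0 := by
          intro a; split <;> simp
        rw [Finset.sum_congr rfl (fun a _ => hinner a),
          Finset.sum_ite_eq' Finset.univ i (fun a => ∑ b, g (a, b)),
          if_pos (Finset.mem_univ i)]
      have hcolsum : ∀ (g : Fin M × Fin n → ℝ), (∀ p, p ∉ F → g p = 0) →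
          ∀ j : Fin n, ∑ q ∈ F, (if q.2 = j then g q else 0) = ∑ i, g (i, j) := by
        intro g hg j
        rw [Finset.sum_subset (Finset.subset_univ F)
          (by intro p _ hp; rw [hg p hp]; simp)]
        rw [Fintype.sum_prod_type]
        refine Finset.sum_congr rfl (fun a _ => ?_)
        rw [Finset.sum_ite_eq' Finset.univ j (fun b => g (a, b)),
          if_pos (Finset.mem_univ j)]
      -- row sums of Δ vanish
      have hΔrows : ∀ i, ∑ j, Δ i j = 0 := by
        intro i
        by_cases hi : i ∈ R'
        · calc ∑ j, Δ i j
              = ∑ q ∈ F, (if q.1 = i then Δ q.1 q.2 else 0) :=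
                (hrowsum (fun q => Δ q.1 q.2) hΔoff i).symm
            _ = ∑ p : ↥F, (if (↑p : Fin M × Fin n).1 = i
                  then Δ (↑p : Fin M × Fin n).1 (↑p : Fin M × Fin n).2 else 0) :=
                (Finset.sum_coe_sort F (fun q => if q.1 = i then Δ q.1 q.2 else 0)).symm
            _ = ∑ p : ↥F, A (Sum.inl ⟨i, hi⟩) p * c p := by
                refine Finset.sum_congr rfl (fun p _ => ?_)
                rw [hgc p, hA]
                simp [ite_mul]
            _ = (A.mulVecLin c) (Sum.inl ⟨i, hi⟩) := by
                simp [Matrix.mulVecLin_apply, Matrix.mulVec, dotProduct]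
            _ = 0 := by rw [hTc]; rfl
        · exact Finset.sum_eq_zero (fun j _ =>
            hΔoff (i, j) (fun hmem => hi (Finset.mem_image_of_mem Prod.fst hmem)))
      -- column sums of Δ vanish away from j0
      have hΔcolsne : ∀ j, j ≠ j0 → ∑ i, (m i:ℝ) * Δ i j = 0 := by
        intro j hj
        by_cases hjC : j ∈ C'
        · have hjC'' : j ∈ C'' := by rw [hC'']; exact Finset.mem_erase.2 ⟨hj, hjC⟩
          calc ∑ i, (m i:ℝ) * Δ i j
              = ∑ q ∈ F, (if q.2 = j then (m q.1:ℝ) * Δ q.1 q.2 else 0) :=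
                (hcolsum (fun q => (m q.1:ℝ) * Δ q.1 q.2)
                  (fun p hp => by
                    show (m p.1:ℝ) * Δ p.1 p.2 = 0
                    rw [hΔoff p hp, mul_zero]) j).symm
            _ = ∑ p : ↥F, (if (↑p : Fin M × Fin n).2 = j
                  then (m (↑p : Fin M × Fin n).1 : ℝ)
                    * Δ (↑p : Fin M × Fin n).1 (↑p : Fin M × Fin n).2 else 0) :=
                (Finset.sum_coe_sort F
                  (fun q => if q.2 = j then (m q.1:ℝ) * Δ q.1 q.2 else 0)).symm
            _ = ∑ p : ↥F, A (Sum.inr ⟨j, hjC''⟩) p * c p := by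
                refine Finset.sum_congr rfl (fun p _ => ?_)
                rw [hgc p, hA]
                simp [ite_mul]
            _ = (A.mulVecLin c) (Sum.inr ⟨j, hjC''⟩) := by
                simp [Matrix.mulVecLin_apply, Matrix.mulVec, dotProduct]
            _ = 0 := by rw [hTc]; rfl
        · exact Finset.sum_eq_zero (fun i _ => by
            rw [hΔoff (i, j) (fun hmem => hjC (Finset.mem_image_of_mem Prod.snd hmem)),
              mul_zero])
      -- all column sums of Δ vanish
      have hΔcols : ∀ j, ∑ i, (m i:ℝ) * Δ i j = 0 := by
        intro j
        by_cases hj : j = j0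
        · subst hj
          have htot : ∑ j', ∑ i, (m i:ℝ) * Δ i j' = 0 := by
            rw [Finset.sum_comm]
            exact Finset.sum_eq_zero (fun i _ => by
              rw [← Finset.mul_sum, hΔrows i, mul_zero])
          have hrest : ∑ j' ∈ Finset.univ.erase j, ∑ i, (m i:ℝ) * Δ i j' = 0 :=
            Finset.sum_eq_zero (fun j' hj' => hΔcolsne j' (Finset.mem_erase.1 hj').1)
          have hsplit := Finset.sum_erase_add Finset.univ
            (fun j' => ∑ i, (m i:ℝ) * Δ i j') (Finset.mem_univ j)
          rw [htot, hrest, zero_add] at hsplit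
          exact hsplit
        · exact hΔcolsne j hj
      have hΔsupp : ∀ i j, Y i j = 0 → Δ i j = 0 := by
        intro i j h0
        by_cases hF' : (i, j) ∈ F
        · exact absurd h0 ((hmemF (i, j)).1 hF').1.ne'
        · exact hΔoff (i, j) hF'
      have hΔ0 := hker Δ hΔsupp hΔrows hΔcols
      obtain ⟨p, hp⟩ := Function.ne_iff.1 hcne0
      apply hp
      have h7 := congrFun (congrFun hΔ0 (↑p : Fin M × Fin n).1) (↑p : Fin M × Fin n).2
      show c p = 0
      rw [← hgc p]
      simpa using h7
    -- conclude
    have hval : ∀ i j, Y i j = 0 ∨ Y i j = (m i:ℝ)⁻¹ := by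
      intro i j
      rcases eq_or_lt_of_le (Ynn i j) with h | h
      · exact Or.inl h.symm
      · exact Or.inr (le_antisymm (hub i j) (hnofrac i j h))
    refine ⟨fun i => Finset.univ.filter (fun j => Y i j ≠ 0), ⟨?_, ?_⟩, ?_⟩
    · intro i
      have h1 : ∑ j ∈ Finset.univ.filter (fun j => Y i j ≠ 0), Y i j = 1 := by
        rw [Finset.sum_filter_ne_zero]; exact hrow i
      have h2 : ∑ j ∈ Finset.univ.filter (fun j => Y i j ≠ 0), Y i j
          = ((Finset.univ.filter (fun j => Y i j ≠ 0)).card : ℝ) * (m i:ℝ)⁻¹ := by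
        rw [Finset.sum_congr rfl (fun j hj => ?_), Finset.sum_const, nsmul_eq_mul]
        rcases hval i j with h | h
        · exact absurd h (Finset.mem_filter.1 hj).2
        · exact h
      have h3 : ((Finset.univ.filter (fun j => Y i j ≠ 0)).card : ℝ) = (m i : ℝ) := by
        rw [h2] at h1
        field_simp at h1
        rwa [div_eq_one_iff_eq (hm0 i).ne'] at h1
      exact_mod_cast h3
    · intro j
      have h2 : ∑ i, (m i:ℝ) * Y i j = ∑ i, (if Y i j ≠ 0 then (1:ℝ) else 0) := by
        refine Finset.sum_congr rfl (fun i _ => ?_)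
        rcases hval i j with h | h
        · simp [h]
        · have hne : Y i j ≠ 0 := by rw [h]; exact (inv_pos.2 (hm0 i)).ne'
          rw [if_pos hne, h, mul_inv_cancel₀ (hm0 i).ne']
      rw [hcol j] at h2
      rw [Finset.sum_boole] at h2
      have h3 : (Finset.univ.filter (fun i => Y i j ≠ 0)).card = 1 := by
        exact_mod_cast h2.symm
      obtain ⟨a, ha⟩ := Finset.card_eq_one.1 h3
      refine ⟨a, ?_, ?_⟩
      · have : a ∈ Finset.univ.filter (fun i => Y i j ≠ 0) := by rw [ha]; exact Finset.mem_singleton_self a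
        have := (Finset.mem_filter.1 this).2
        simpa using this
      · intro y hy
        have : y ∈ Finset.univ.filter (fun i => Y i j ≠ 0) := by
          refine Finset.mem_filter.2 ⟨Finset.mem_univ _, ?_⟩
          simpa using hy
        rw [ha] at this
        exact Finset.mem_singleton.1 this
    · funext i j
      by_cases h : Y i j = 0
      · rw [if_neg (by simp [h]), h]
      · rcases hval i j with h' | h'
        · exact absurd h' h
        · rw [if_pos (by simp [h]), h']
  · rintro ⟨P, ⟨hcard, hpart⟩, rfl⟩
    have hmemD : (fun i j => if j ∈ P i then ((m i:ℝ))⁻¹ else 0) ∈ stochPolytope m := by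
      refine ⟨?_, ?_, ?_⟩
      · intro i j
        show (0:ℝ) ≤ if j ∈ P i then ((m i:ℝ))⁻¹ else 0
        split
        · positivity
        · exact le_refl 0
      · intro i
        rw [Finset.sum_ite_mem, Finset.univ_inter, Finset.sum_const, nsmul_eq_mul,
          hcard i, mul_inv_cancel₀ (hm0 i).ne']
      · intro j
        have h1 : ∀ i : Fin M, (m i:ℝ) * (if j ∈ P i then ((m i:ℝ))⁻¹ else 0)
            = if j ∈ P i then (1:ℝ) else 0 := by
          intro i
          split
          · exact mul_inv_cancel₀ (hm0 i).ne'
          · exact mul_zero _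
        simp only [h1]
        rw [Finset.sum_boole]
        obtain ⟨a, hamem, hauniq⟩ := hpart j
        have : Finset.univ.filter (fun i => j ∈ P i) = {a} := by
          ext i
          simp only [Finset.mem_filter, Finset.mem_univ, true_and, Finset.mem_singleton]
          exact ⟨fun h => hauniq i h, fun h => h ▸ hamem⟩
        rw [this, Finset.card_singleton, Nat.cast_one]
    refine ⟨hmemD, ?_⟩
    intro x₁ hx₁ x₂ hx₂ hseg
    obtain ⟨a, b, ha, hb, hab, hsum⟩ := hseg
    have hzero : ∀ i j, j ∉ P i → x₁ i j = 0 ∧ x₂ i j = 0 := by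
      intro i j hij
      have h0 : a * x₁ i j + b * x₂ i j = 0 := by
        have := congrFun (congrFun hsum i) j
        simpa [Pi.add_apply, Pi.smul_apply, smul_eq_mul, if_neg hij] using this
      have h1 := hx₁.1 i j
      have h2 := hx₂.1 i j
      constructor <;> nlinarith
    have hdet : ∀ x ∈ stochPolytope m, (∀ i j, j ∉ P i → x i j = 0) →
        x = fun i j => if j ∈ P i then ((m i:ℝ))⁻¹ else 0 := by
      intro x hx hxz
      funext i j
      by_cases hij : j ∈ P i
      · rw [if_pos hij]
        obtain ⟨i', hi'mem, huniq⟩ := hpart j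
        have hii' : i = i' := huniq i hij
        have hcolx := hx.2.2 j
        have hsingle : ∑ i'', (m i'':ℝ) * x i'' j = (m i:ℝ) * x i j := by
          refine Finset.sum_eq_single_of_mem i (Finset.mem_univ i) ?_
          intro k _ hk
          have hkj : j ∉ P k := fun hjk => hk (by rw [huniq k hjk, ← hii'])
          rw [hxz k j hkj, mul_zero]
        rw [hsingle] at hcolx
        have := mul_left_cancel₀ (hm0 i).ne'
          (by rw [hcolx, mul_inv_cancel₀ (hm0 i).ne'] : (m i:ℝ) * x i j = (m i:ℝ) * (m i:ℝ)⁻¹)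
        exact this
      · rw [if_neg hij]
        exact hxz i j hij
    exact hdet x₁ hx₁ (fun i j h => (hzero i j h).1)
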